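/- Let L be a symmetric real n×n matrix, V a real n×p matrix of full column rank with 1 ≤ p < n, A a symmetric real p×p matrix, and σ² > 0, and suppose the saddle-point matrix S = [[L + σ²I, V], [Vᵀ, 0]] is invertible. Then S′ = [[L + VAVᵀ + σ²I, V], [Vᵀ, 0]] is also invertible, and for every y ∈ ℝⁿ the two systems have the same solution: if S(α; β) = (y; 0) then S′(α; β) = (y; 0). Consequently, for every l ∈ ℝⁿ and v ∈ ℝᵖ, the predictive means agree: ((l + VAv)ᵀ, vᵀ) S′⁻¹ (y; 0) = (lᵀ, vᵀ) S⁻¹ (y; 0). -/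
import Mathlib


open Matrix

/-- **Prediction-equivalence under kernel modification along the basis.**
Let `L ∈ ℝ^{n×n}` be symmetric, `V ∈ ℝ^{n×p}` of full column rank
(`1 ≤ p < n`), `A ∈ ℝ^{p×p}` symmetric, `σ² > 0`, and suppose the saddle-point
matrix `S = [[L + σ²I, V], [Vᵀ, 0]]` is invertible. Then
`S′ = [[L + VAVᵀ + σ²I, V], [Vᵀ, 0]]` is invertible, both systems have the same
solution for right-hand side `(y; 0)`, and the predictive means agree:
`((l + VAv)ᵀ, vᵀ) S′⁻¹ (y; 0) = (lᵀ, vᵀ) S⁻¹ (y; 0)`. -/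
theorem prediction_equivalence_kernel_plus_basis_term
    (n p : ℕ) (hp : 1 ≤ p) (hpn : p < n)
    (L : Matrix (Fin n) (Fin n) ℝ) (hL : L.IsSymm)
    (V : Matrix (Fin n) (Fin p) ℝ) (hV : V.rank = p)
    (A : Matrix (Fin p) (Fin p) ℝ) (hA : A.IsSymm)
    (σ2 : ℝ) (hσ2 : 0 < σ2)
    (hS : IsUnit (fromBlocks (L + σ2 • 1) V Vᵀ (0 : Matrix (Fin p) (Fin p) ℝ))) :
    IsUnit (fromBlocks (L + V * A * Vᵀ + σ2 • 1) V Vᵀ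
        (0 : Matrix (Fin p) (Fin p) ℝ)) ∧
    (∀ (y α : Fin n → ℝ) (β : Fin p → ℝ),
      (fromBlocks (L + σ2 • 1) V Vᵀ (0 : Matrix (Fin p) (Fin p) ℝ)) *ᵥ
          Sum.elim α β = Sum.elim y (0 : Fin p → ℝ) →
      (fromBlocks (L + V * A * Vᵀ + σ2 • 1) V Vᵀ
          (0 : Matrix (Fin p) (Fin p) ℝ)) *ᵥ
          Sum.elim α β = Sum.elim y (0 : Fin p → ℝ)) ∧
    ∀ (y l : Fin n → ℝ) (v : Fin p → ℝ),
      Sum.elim (l + V *ᵥ (A *ᵥ v)) v ⬝ᵥ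
          ((fromBlocks (L + V * A * Vᵀ + σ2 • 1) V Vᵀ
              (0 : Matrix (Fin p) (Fin p) ℝ))⁻¹ *ᵥ
            Sum.elim y (0 : Fin p → ℝ))
        = Sum.elim l v ⬝ᵥ
          ((fromBlocks (L + σ2 • 1) V Vᵀ (0 : Matrix (Fin p) (Fin p) ℝ))⁻¹ *ᵥ
            Sum.elim y (0 : Fin p → ℝ)) := by
  set S : Matrix (Fin n ⊕ Fin p) (Fin n ⊕ Fin p) ℝ :=
    fromBlocks (L + σ2 • 1) V Vᵀ 0 with hSdef
  set E : Matrix (Fin n ⊕ Fin p) (Fin n ⊕ Fin p) ℝ :=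
    fromBlocks 1 (V * A) 0 1 with hEdef
  set E' : Matrix (Fin n ⊕ Fin p) (Fin n ⊕ Fin p) ℝ :=
    fromBlocks 1 (-(V * A)) 0 1 with hE'def
  have hEE' : E * E' = 1 := by
    rw [hEdef, hE'def, fromBlocks_multiply, ← fromBlocks_one]
    congr 1 <;> simp
  have hE'E : E' * E = 1 := by
    rw [hEdef, hE'def, fromBlocks_multiply, ← fromBlocks_one]
    congr 1 <;> simp
  have hE : IsUnit E := @isUnit_of_invertible _ _ E (invertibleOfRightInverse E E' hEE')
  have hS' : fromBlocks (L + V * A * Vᵀ + σ2 • 1) V Vᵀ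
      (0 : Matrix (Fin p) (Fin p) ℝ) = E * S := by
    rw [hEdef, hSdef, fromBlocks_multiply]
    congr 1 <;> simp [Matrix.mul_assoc] <;> abel
  have hEfix : ∀ y : Fin n → ℝ, E *ᵥ Sum.elim y (0 : Fin p → ℝ)
      = Sum.elim y 0 := by
    intro y; rw [hEdef, fromBlocks_mulVec]; simp
  have hE'fix : ∀ y : Fin n → ℝ, E' *ᵥ Sum.elim y (0 : Fin p → ℝ)
      = Sum.elim y 0 := by
    intro y; rw [hE'def, fromBlocks_mulVec]; simp
  refine ⟨hS' ▸ hE.mul hS, ?_, ?_⟩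
  · intro y α β h
    rw [hS', ← Matrix.mulVec_mulVec, h, hEfix]
  · intro y l v
    have hinv : (fromBlocks (L + V * A * Vᵀ + σ2 • 1) V Vᵀ
        (0 : Matrix (Fin p) (Fin p) ℝ))⁻¹ = S⁻¹ * E' := by
      rw [hS', Matrix.mul_inv_rev, Matrix.inv_eq_right_inv hEE']
    rw [hinv, ← Matrix.mulVec_mulVec, hE'fix]
    set x : Fin n ⊕ Fin p → ℝ := S⁻¹ *ᵥ Sum.elim y 0 with hxdef
    have hSx : S *ᵥ x = Sum.elim y 0 := by
      rw [hxdef, Matrix.mulVec_mulVec,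
        Matrix.mul_nonsing_inv S ((Matrix.isUnit_iff_isUnit_det S).mp hS),
        Matrix.one_mulVec]
    have hxelim : x = Sum.elim (x ∘ Sum.inl) (x ∘ Sum.inr) :=
      (Sum.elim_comp_inl_inr x).symm
    have hVt : Vᵀ *ᵥ (x ∘ Sum.inl) = 0 := by
      have := hSx
      rw [hxelim, hSdef, fromBlocks_mulVec] at this
      have h2 := congrArg (fun f => f ∘ Sum.inr) this
      simp at h2
      exact h2
    calc Sum.elim (l + V *ᵥ (A *ᵥ v)) v ⬝ᵥ x
        = Sum.elim (l + V *ᵥ (A *ᵥ v)) v ⬝ᵥ Sum.elim (x ∘ Sum.inl) (x ∘ Sum.inr) := by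
          rw [← hxelim]
      _ = (l + V *ᵥ (A *ᵥ v)) ⬝ᵥ (x ∘ Sum.inl) + v ⬝ᵥ (x ∘ Sum.inr) := by
          rw [sumElim_dotProduct_sumElim]
      _ = l ⬝ᵥ (x ∘ Sum.inl) + (A *ᵥ v) ⬝ᵥ (Vᵀ *ᵥ (x ∘ Sum.inl)) + v ⬝ᵥ (x ∘ Sum.inr) := by
          have key : (V *ᵥ (A *ᵥ v)) ⬝ᵥ (x ∘ Sum.inl)
              = (A *ᵥ v) ⬝ᵥ (Vᵀ *ᵥ (x ∘ Sum.inl)) := by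
            rw [Matrix.dotProduct_mulVec, Matrix.vecMul_transpose]
          rw [add_dotProduct, key]
      _ = l ⬝ᵥ (x ∘ Sum.inl) + v ⬝ᵥ (x ∘ Sum.inr) := by
          rw [hVt, dotProduct_zero]; ring
      _ = Sum.elim l v ⬝ᵥ Sum.elim (x ∘ Sum.inl) (x ∘ Sum.inr) := by
          rw [sumElim_dotProduct_sumElim]
      _ = Sum.elim l v ⬝ᵥ x := by rw [← hxelim]
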